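/- Let θ, z : (a,b) → ℝ be C¹ functions satisfying θ'(t) = √(1 - cos²θ(t)/z(t)²) > 0 and z'(t) = sin θ(t) on (a,b), with z > |cos θ|, and suppose θ(t) → 0 and z(t) → 1 as t → a⁺. Then sin²θ(t)/θ'(t)² → 0 as t → a⁺. -/

import Mathlib

open Filter Set Real
open scoped Topology

theorem sin_sq_div_deriv_sq_tendsto_zero (a b : ℝ) (θ z θ' : ℝ → ℝ)
    (hdom : ∀ t ∈ Set.Ioo a b, |Real.cos (θ t)| < z t)
    (hθ : ∀ t ∈ Set.Ioo a b, HasDerivAt θ (θ' t) t)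
    (hθ'eq : ∀ t ∈ Set.Ioo a b,
      θ' t = Real.sqrt (1 - (Real.cos (θ t)) ^ 2 / (z t) ^ 2))
    (hθ'pos : ∀ t ∈ Set.Ioo a b, 0 < θ' t)
    (hz' : ∀ t ∈ Set.Ioo a b, HasDerivAt z (Real.sin (θ t)) t)
    (hθlim : Filter.Tendsto θ (nhdsWithin a (Set.Ioo a b)) (nhds 0))
    (hzlim : Filter.Tendsto z (nhdsWithin a (Set.Ioo a b)) (nhds 1)) :
    Filter.Tendsto (fun t => (Real.sin (θ t)) ^ 2 / (θ' t) ^ 2)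
      (nhdsWithin a (Set.Ioo a b)) (nhds 0) := by
  rcases le_or_gt b a with hba | hab
  · rw [Set.Ioo_eq_empty (by exact fun h => absurd hba (not_le.mpr h)), nhdsWithin_empty]
    exact tendsto_bot
  rw [nhdsWithin_Ioo_eq_nhdsGT hab] at *
  have hmem : Set.Ioo a b ∈ 𝓝[>] a := Ioo_mem_nhdsGT_of_mem ⟨le_refl a, hab⟩
  -- θ is strictly monotone
  have hmono : StrictMonoOn θ (Set.Ioo a b) := by
    apply strictMonoOn_of_deriv_pos (convex_Ioo a b)
    · exact fun t ht => (hθ t ht).continuousAt.continuousWithinAt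
    · intro t ht
      rw [interior_Ioo] at ht
      rw [(hθ t ht).deriv]
      exact hθ'pos t ht
  -- θ > 0 on Ioo a b
  have h0 : ∀ t ∈ Set.Ioo a b, 0 ≤ θ t := by
    intro t ht
    refine le_of_tendsto hθlim ?_
    filter_upwards [Ioo_mem_nhdsGT_of_mem ⟨le_refl a, ht.1⟩] with s hs
    exact le_of_lt (hmono ⟨hs.1, hs.2.trans ht.2⟩ ht hs.2)
  have hpos : ∀ t ∈ Set.Ioo a b, 0 < θ t := by
    intro t ht
    have hs : (a + t) / 2 ∈ Set.Ioo a b :=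
      ⟨by linarith [ht.1], by nlinarith [ht.1, ht.2]⟩
    have := hmono hs ht (by linarith [ht.1])
    have := h0 _ hs
    linarith
  -- eventually θ ∈ (0,1), and sin θ > 0
  have hsmall : ∀ᶠ t in 𝓝[>] a, t ∈ Set.Ioo a b ∧ 0 < θ t ∧ θ t < 1 := by
    filter_upwards [hmem, hθlim.eventually (gt_mem_nhds (by norm_num : (0:ℝ) < 1))] with t ht h1
    exact ⟨ht, hpos t ht, h1⟩
  have hsin : ∀ᶠ t in 𝓝[>] a, 0 < Real.sin (θ t) := by
    filter_upwards [hsmall] with t ⟨ht, h1, h2⟩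
    exact Real.sin_pos_of_pos_of_lt_pi h1 (h2.trans (by linarith [Real.pi_gt_three]))
  -- θ' → 0
  have hcoslim : Tendsto (fun t => Real.cos (θ t)) (𝓝[>] a) (𝓝 1) := by
    have := (Real.continuous_cos.tendsto 0).comp hθlim
    simpa [Function.comp_def] using this
  have h1lim : Tendsto (fun t => 1 - Real.cos (θ t) ^ 2 / (z t) ^ 2) (𝓝[>] a) (𝓝 0) := by
    have : Tendsto (fun t => 1 - Real.cos (θ t) ^ 2 / (z t) ^ 2) (𝓝[>] a)
        (𝓝 (1 - 1 ^ 2 / (1:ℝ) ^ 2)) :=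
      tendsto_const_nhds.sub ((hcoslim.pow 2).div (hzlim.pow 2) (by norm_num))
    simpa using this
  have hθ'lim : Tendsto θ' (𝓝[>] a) (𝓝 0) := by
    have h := (Real.continuous_sqrt.tendsto 0).comp h1lim
    rw [Real.sqrt_zero] at h
    apply h.congr'
    filter_upwards [hmem] with t ht
    exact (hθ'eq t ht).symm
  -- derivative of cos ∘ θ
  have key : ∀ t ∈ Set.Ioo a b,
      HasDerivAt (fun s => Real.cos (θ s)) (-Real.sin (θ t) * θ' t) t :=
    fun t ht => (Real.hasDerivAt_cos (θ t)).comp t (hθ t ht)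
  -- L'Hôpital
  have hL : Tendsto (fun t => (1 - Real.cos (θ t)) / (z t - Real.cos (θ t))) (𝓝[>] a) (𝓝 0) := by
    apply HasDerivAt.lhopital_zero_nhdsGT
      (f' := fun t => Real.sin (θ t) * θ' t)
      (g' := fun t => Real.sin (θ t) + Real.sin (θ t) * θ' t)
    · filter_upwards [hmem] with t ht
      have := (hasDerivAt_const t (1:ℝ)).fun_sub (key t ht)
      exact this.congr_deriv (by ring)
    · filter_upwards [hmem] with t ht
      have := (hz' t ht).fun_sub (key t ht)
      exact this.congr_deriv (by ring)
    · filter_upwards [hmem, hsin] with t ht hs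
      have := hθ'pos t ht
      positivity
    · have : Tendsto (fun t => 1 - Real.cos (θ t)) (𝓝[>] a) (𝓝 (1 - 1)) :=
        tendsto_const_nhds.sub hcoslim
      simpa using this
    · have : Tendsto (fun t => z t - Real.cos (θ t)) (𝓝[>] a) (𝓝 (1 - 1)) :=
        hzlim.sub hcoslim
      simpa using this
    · have h2 : Tendsto (fun t => θ' t / (1 + θ' t)) (𝓝[>] a) (𝓝 (0 / (1 + 0))) :=
        hθ'lim.div (tendsto_const_nhds.add hθ'lim) (by norm_num)
      rw [show (0:ℝ) / (1 + 0) = 0 by norm_num] at h2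
      apply h2.congr'
      filter_upwards [hsin] with t hs
      rw [show Real.sin (θ t) + Real.sin (θ t) * θ' t = Real.sin (θ t) * (1 + θ' t) by ring,
        show Real.sin (θ t) * θ' t = Real.sin (θ t) * θ' t by rfl,
        mul_div_mul_left _ _ (ne_of_gt hs)]
  -- second factor
  have hR : Tendsto (fun t => (1 + Real.cos (θ t)) / (z t + Real.cos (θ t))) (𝓝[>] a)
      (𝓝 1) := by
    have : Tendsto (fun t => (1 + Real.cos (θ t)) / (z t + Real.cos (θ t))) (𝓝[>] a)
        (𝓝 ((1 + 1) / (1 + 1))) :=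
      (tendsto_const_nhds.add hcoslim).div (hzlim.add hcoslim) (by norm_num)
    simpa using this
  have hz2 : Tendsto (fun t => (z t) ^ 2) (𝓝[>] a) (𝓝 1) := by
    have := hzlim.pow 2
    simpa using this
  have hfinal := hz2.mul (hL.mul hR)
  rw [show (1:ℝ) * (0 * 1) = 0 by ring] at hfinal
  apply hfinal.congr'
  filter_upwards [hmem] with t ht
  set c := Real.cos (θ t) with hc
  have hzc := hdom t ht
  have hzpos : 0 < z t := lt_of_le_of_lt (abs_nonneg c) hzc
  have hmc : -z t < c := (abs_lt.mp hzc).1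
  have hcz : c < z t := (abs_lt.mp hzc).2
  have hzsub : 0 < z t - c := by linarith
  have hzadd : 0 < z t + c := by linarith
  have hsq : θ' t ^ 2 = 1 - c ^ 2 / (z t) ^ 2 := by
    rw [hθ'eq t ht]
    apply Real.sq_sqrt
    have hc2 : c ^ 2 < (z t) ^ 2 := by nlinarith [abs_nonneg c, sq_abs c]
    have : c ^ 2 / (z t) ^ 2 < 1 := (div_lt_one (by positivity)).mpr hc2
    linarith
  have hne : z t ^ 2 - c ^ 2 ≠ 0 := by nlinarith
  have hz0 : z t ≠ 0 := ne_of_gt hzpos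
  rw [Real.sin_sq, hsq]
  field_simp [hne]
  ring
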